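/- arXiv:0708.3557 — 3 statements merged into one kernel-verified Lean document; each statement's English description precedes it below -/
import Mathlib

section
/- For every integer n ≥ 1, the sum of μ^(e)(d) over all exponential divisors d of n equals μ(n)², where μ is the Möbius function. -/
open Nat ArithmeticFunction Finset
open scoped Classical

/-- `d` is an exponential divisor of `n`: same prime factors, and each exponent of `d`
divides the corresponding exponent of `n`. (By convention `1 ∣ₑ 1`.) -/
def IsExpDivisor (d n : ℕ) : Prop :=
  d.primeFactors = n.primeFactors ∧
    ∀ p ∈ n.primeFactors, d.factorization p ∣ n.factorization p

/-- The exponential Möbius function `μ^(e)`. -/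
noncomputable def muE (n : ℕ) : ℤ :=
  ∏ p ∈ n.primeFactors, moebius (n.factorization p)

lemma mem_pf_iff (d p : ℕ) : p ∈ d.primeFactors ↔ d.factorization p ≠ 0 := by
  rw [← Nat.support_factorization, Finsupp.mem_support_iff]

section Toggle

variable {n q r : ℕ} (hn0 : n ≠ 0) (hq : q.Prime) (hqn : q ∈ n.primeFactors)
  (hr : r.Prime) (hra : r ∣ n.factorization q)

/-- The toggled element: replace the exponent `b` of `q` in `d` by `b'`. -/
noncomputable def tog (q : ℕ) (r : ℕ) (d : ℕ) : ℕ :=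
  let b := d.factorization q
  (d / q ^ b) * q ^ (if r ∣ b then b / r else b * r)

lemma tog_factorization (hq : q.Prime) {d : ℕ} (hd0 : d ≠ 0) (hqd : q ∈ d.primeFactors) :
    (tog q r d) ≠ 0 ∧
    (tog q r d).factorization q =
      (if r ∣ d.factorization q then d.factorization q / r else d.factorization q * r) ∧
    ∀ p ≠ q, (tog q r d).factorization p = d.factorization p := by
  set b := d.factorization q with hb
  set b' := if r ∣ b then b / r else b * r with hb'
  have hdvd : q ^ b ∣ d := Nat.ordProj_dvd d q
  have h1 : d / q ^ b ≠ 0 := (Nat.ordCompl_pos q hd0).ne'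
  have h2 : (q ^ b' : ℕ) ≠ 0 := pow_ne_zero _ hq.pos.ne'
  have ht0 : tog q r d ≠ 0 := mul_ne_zero h1 h2
  have hfc : (d / q ^ b).factorization = d.factorization.erase q := by
    simpa [hb] using Nat.factorization_ordCompl d q
  have hfm : (tog q r d).factorization = (d / q ^ b).factorization + (q ^ b').factorization :=
    Nat.factorization_mul h1 h2
  refine ⟨ht0, ?_, ?_⟩
  · rw [hfm, Finsupp.add_apply, hfc, Finsupp.erase_same, hq.factorization_pow,
      Finsupp.single_eq_same, zero_add]
  · intro p hp
    rw [hfm, Finsupp.add_apply, hfc, Finsupp.erase_ne hp, hq.factorization_pow,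
      Finsupp.single_eq_of_ne' (Ne.symm hp), add_zero]

end Toggle

lemma tog_key {n q r : ℕ} (hn0 : n ≠ 0) (hq : q.Prime) (hqn : q ∈ n.primeFactors)
    (hr : r.Prime) (hra : r ∣ n.factorization q) {d : ℕ}
    (hd : d ∈ n.divisors.filter (fun d => IsExpDivisor d n))
    (hsb : Squarefree (d.factorization q)) :
    tog q r d ∈ n.divisors.filter (fun d => IsExpDivisor d n) ∧
      Squarefree ((tog q r d).factorization q) ∧
      muE (tog q r d) = - muE d ∧ tog q r d ≠ d := by
  simp only [mem_filter, Nat.mem_divisors] at hd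
  obtain ⟨⟨hdn, -⟩, hpf, hdvd⟩ := hd
  have hd0 : d ≠ 0 := fun h => hn0 (Nat.eq_zero_of_zero_dvd (h ▸ hdn))
  have hqd : q ∈ d.primeFactors := hpf ▸ hqn
  set a := n.factorization q with ha
  set b := d.factorization q with hb
  have hb0 : b ≠ 0 := (mem_pf_iff d q).mp hqd
  have ha0 : a ≠ 0 := (mem_pf_iff n q).mp hqn
  have hba : b ∣ a := hdvd q hqn
  obtain ⟨ht0, htq, htp⟩ := tog_factorization (r := r) hq hd0 hqd
  rw [← hb] at htq
  set t := tog q r d with htdef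
  set b' := if r ∣ b then b / r else b * r with hb'
  have hb'0 : b' ≠ 0 := by
    rw [hb']; split
    · next h => exact Nat.div_ne_zero_iff.mpr ⟨hr.pos.ne', Nat.le_of_dvd (Nat.pos_of_ne_zero hb0) h⟩
    · exact mul_ne_zero hb0 hr.pos.ne'
  have hb'a : b' ∣ a := by
    rw [hb']; split
    · next h => exact dvd_trans ⟨r, (Nat.div_mul_cancel h).symm⟩ hba
    · next h =>
        exact Nat.Coprime.mul_dvd_of_dvd_of_dvd ((hr.coprime_iff_not_dvd.mpr h).symm) hba hra
  have hsb' : Squarefree b' := by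
    rw [hb']; split
    · next h => exact hsb.squarefree_of_dvd ⟨r, (Nat.div_mul_cancel h).symm⟩
    · next h =>
        exact (Nat.squarefree_mul ((hr.coprime_iff_not_dvd.mpr h).symm)).mpr ⟨hsb, hr.squarefree⟩
  have hmu : moebius b' = - moebius b := by
    rw [hb']; split
    · next h =>
        have hnr : ¬ r ∣ b / r := by
          intro hc
          obtain ⟨c, hc2⟩ := hc
          exact hr.prime.not_unit (hsb r ⟨c, by
            rw [← Nat.div_mul_cancel h, hc2]; ring⟩)
        have hco : Nat.Coprime (b / r) r := (hr.coprime_iff_not_dvd.mpr hnr).symm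
        have : moebius b = moebius (b / r) * moebius r := by
          conv_lhs => rw [← Nat.div_mul_cancel h]
          exact isMultiplicative_moebius.map_mul_of_coprime hco
        rw [this, moebius_apply_prime hr]; ring
    · next h =>
        have hco : Nat.Coprime b r := (hr.coprime_iff_not_dvd.mpr h).symm
        rw [isMultiplicative_moebius.map_mul_of_coprime hco, moebius_apply_prime hr]; ring
  have hpft : t.primeFactors = d.primeFactors := by
    ext p
    rw [mem_pf_iff, mem_pf_iff]
    by_cases hpq : p = q
    · subst hpq; rw [htq]; simp [hb'0, hb0]; exact hb0
    · rw [htp p hpq]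
  have hne : t ≠ d := by
    have hbb : b' ≠ b := by
      rw [hb']; split
      · next h => exact (Nat.div_lt_self (Nat.pos_of_ne_zero hb0) hr.one_lt).ne
      · next h =>
          intro hc
          nlinarith [hr.two_le, Nat.pos_of_ne_zero hb0]
    intro hc
    exact hbb (by rw [← htq, hc])
  refine ⟨?_, by rw [htq]; exact hsb', ?_, hne⟩
  · simp only [mem_filter, Nat.mem_divisors]
    refine ⟨⟨?_, hn0⟩, hpft.trans hpf, ?_⟩
    · rw [← Nat.factorization_le_iff_dvd ht0 hn0, Finsupp.le_def]
      intro p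
      by_cases hpq : p = q
      · subst hpq; rw [htq]; exact Nat.le_of_dvd (Nat.pos_of_ne_zero ha0) hb'a
      · rw [htp p hpq]
        exact (Finsupp.le_def.mp ((Nat.factorization_le_iff_dvd hd0 hn0).mpr hdn)) p
    · intro p hp
      by_cases hpq : p = q
      · subst hpq; rw [htq]; exact hb'a
      · rw [htp p hpq]; exact hdvd p hp
  · unfold muE
    rw [hpft]
    have hrest : ∏ p ∈ d.primeFactors \ {q}, moebius (t.factorization p)
        = ∏ p ∈ d.primeFactors \ {q}, moebius (d.factorization p) :=
      Finset.prod_congr rfl fun p hp => by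
        rw [htp p (Finset.notMem_singleton.mp (Finset.mem_sdiff.mp hp).2)]
    rw [Finset.prod_eq_mul_prod_sdiff_singleton_of_mem hqd (fun p => moebius (t.factorization p)),
      Finset.prod_eq_mul_prod_sdiff_singleton_of_mem hqd (fun p => moebius (d.factorization p)),
      htq, hmu, hrest]
    ring

lemma tog_tog {q r d : ℕ} (hq : q.Prime) (hr : r.Prime) (hd0 : d ≠ 0)
    (hqd : q ∈ d.primeFactors) (hsb : Squarefree (d.factorization q)) :
    tog q r (tog q r d) = d := by
  obtain ⟨ht0, htq, htp⟩ := tog_factorization (r := r) hq hd0 hqd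
  set b := d.factorization q with hb
  have hb0 : b ≠ 0 := (mem_pf_iff d q).mp hqd
  have hb'0 : (tog q r d).factorization q ≠ 0 := by
    rw [htq]; split
    · next h => exact Nat.div_ne_zero_iff.mpr ⟨hr.pos.ne', Nat.le_of_dvd (Nat.pos_of_ne_zero hb0) h⟩
    · exact mul_ne_zero hb0 hr.pos.ne'
  have hqt : q ∈ (tog q r d).primeFactors := (mem_pf_iff _ q).mpr hb'0
  obtain ⟨ht20, ht2q, ht2p⟩ := tog_factorization (r := r) hq ht0 hqt
  refine Nat.eq_of_factorization_eq ht20 hd0 fun p => ?_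
  by_cases hpq : p = q
  · subst hpq
    rw [ht2q, htq]
    by_cases h : r ∣ b
    · have hnr : ¬ r ∣ b / r := by
        intro hc
        obtain ⟨c, hc2⟩ := hc
        exact hr.prime.not_unit (hsb r ⟨c, by
          rw [← Nat.div_mul_cancel h, hc2]; ring⟩)
      rw [if_pos h, if_neg hnr, Nat.div_mul_cancel h]
    · rw [if_neg h, if_pos (dvd_mul_left r b), Nat.mul_div_cancel _ hr.pos]
  · rw [ht2p p hpq, htp p hpq]

theorem sum_muE_expDivisors (n : ℕ) (hn : 1 ≤ n) :
    (∑ d ∈ n.divisors.filter (fun d => IsExpDivisor d n), muE d) = (moebius n) ^ 2 := by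
  have hn0 : n ≠ 0 := by omega
  by_cases hsq : Squarefree n
  · -- squarefree case: the only exponential divisor is `n`.
    have hset : n.divisors.filter (fun d => IsExpDivisor d n) = {n} := by
      ext d
      simp only [mem_filter, Nat.mem_divisors, mem_singleton]
      constructor
      · rintro ⟨⟨hdn, -⟩, hpf, hdvd⟩
        have hd0 : d ≠ 0 := fun h => hn0 (by
          have := hdn; subst h; exact (Nat.eq_zero_of_zero_dvd this))
        refine Nat.eq_of_factorization_eq hd0 hn0 fun p => ?_
        by_cases hp : p ∈ n.primeFactors
        · have h1 : n.factorization p = 1 :=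
            le_antisymm ((Nat.squarefree_iff_factorization_le_one hn0).mp hsq p)
              (Nat.one_le_iff_ne_zero.mpr ((mem_pf_iff n p).mp hp))
          have hdp : d.factorization p ∣ 1 := h1 ▸ hdvd p hp
          have hdp0 : d.factorization p ≠ 0 := (mem_pf_iff d p).mp (hpf ▸ hp)
          rw [h1, Nat.eq_one_of_dvd_one hdp]
        · have h2 : d.factorization p = 0 := by
            by_contra h; exact hp (hpf ▸ (mem_pf_iff d p).mpr h)
          have h3 : n.factorization p = 0 := by
            by_contra h; exact hp ((mem_pf_iff n p).mpr h)
          rw [h2, h3]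
      · rintro rfl
        exact ⟨⟨dvd_rfl, hn0⟩, rfl, fun p _ => dvd_rfl⟩
    rw [hset, Finset.sum_singleton, moebius_sq_eq_one_of_squarefree hsq]
    unfold muE
    rw [Finset.prod_congr rfl fun p hp => ?_, Finset.prod_const_one]
    have h1 : n.factorization p = 1 :=
      le_antisymm ((Nat.squarefree_iff_factorization_le_one hn0).mp hsq p)
        (Nat.one_le_iff_ne_zero.mpr ((mem_pf_iff n p).mp hp))
    rw [h1]; simp
  · -- non-squarefree case: both sides are 0.
    rw [moebius_eq_zero_of_not_squarefree hsq, zero_pow (by norm_num : 2 ≠ 0)]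
    obtain ⟨q, hq', hq2⟩ : ∃ q, Prime q ∧ q * q ∣ n := by
      rw [Nat.squarefree_iff_prime_squarefree] at hsq; push_neg at hsq; exact hsq
    have hq : q.Prime := hq'
    have ha2 : 2 ≤ n.factorization q := by
      rw [← Nat.Prime.pow_dvd_iff_le_factorization hq hn0, sq]; exact hq2
    have hqn : q ∈ n.primeFactors := (mem_pf_iff n q).mpr (by omega)
    set r := (n.factorization q).minFac with hrdef
    have hr : r.Prime := Nat.minFac_prime (by omega)
    have hra : r ∣ n.factorization q := Nat.minFac_dvd _
    have key := fun {d} hd hsb => tog_key hn0 hq hqn hr hra (d := d) hd hsb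
    have hzero : ∀ d ∈ n.divisors.filter (fun d => IsExpDivisor d n),
        ¬ Squarefree (d.factorization q) → muE d = 0 := by
      intro d hd hsb
      simp only [mem_filter, Nat.mem_divisors] at hd
      have hqd : q ∈ d.primeFactors := hd.2.1 ▸ hqn
      exact Finset.prod_eq_zero hqd (moebius_eq_zero_of_not_squarefree hsb)
    refine Finset.sum_involution
      (fun d _ => if Squarefree (d.factorization q) then tog q r d else d) ?_ ?_ ?_ ?_
    · intro d hd
      beta_reduce
      by_cases hsb : Squarefree (d.factorization q)
      · rw [if_pos hsb, (key hd hsb).2.2.1]; ring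
      · rw [if_neg hsb, hzero d hd hsb]; ring
    · intro d hd hmu
      beta_reduce
      by_cases hsb : Squarefree (d.factorization q)
      · rw [if_pos hsb]; exact (key hd hsb).2.2.2
      · exact absurd (hzero d hd hsb) hmu
    · intro d hd
      beta_reduce
      by_cases hsb : Squarefree (d.factorization q)
      · rw [if_pos hsb]; exact (key hd hsb).1
      · rw [if_neg hsb]; exact hd
    · intro d hd
      beta_reduce
      by_cases hsb : Squarefree (d.factorization q)
      · simp only [if_pos hsb, if_pos (key hd hsb).2.1]
        have hd0 : d ≠ 0 := by
          simp only [mem_filter, Nat.mem_divisors] at hd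
          exact fun h => hn0 (Nat.eq_zero_of_zero_dvd (h ▸ hd.1.1))
        have hqd : q ∈ d.primeFactors := by
          simp only [mem_filter, Nat.mem_divisors] at hd
          exact hd.2.1 ▸ hqn
        exact tog_tog hq hr hd0 hqd hsb
      · simp only [if_neg hsb]
end

section
/- For every n ≥ 1, ℓ(n)·2^{ω(n)} = Σ_{d²e = n} τ(d)·h(e), where ℓ is the characteristic function of squarefull numbers, τ is the number-of-divisors function, and h is the multiplicative function determined by the Euler product with local factor 1 + 2p^{−3s} − p^{−4s} − 2p^{−5s}, i.e., h(p) = h(p²) = 0, h(p³) = 2, h(p⁴) = −1, h(p⁵) = −2, and h(p^a) = 0 for a ≥ 6. -/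
open Nat ArithmeticFunction Finset
open scoped Classical

/-- `n` is squarefull. -/
def Squarefull (n : ℕ) : Prop := ∀ p : ℕ, p.Prime → p ∣ n → p ^ 2 ∣ n

/-- Values of the multiplicative function `h` on prime powers `p^a` (`a ≥ 1`). -/
def hPP (a : ℕ) : ℤ :=
  if a = 3 then 2 else if a = 4 then -1 else if a = 5 then -2 else 0

/-- The multiplicative function `h` with Euler factor `1 + 2p^{-3s} - p^{-4s} - 2p^{-5s}`. -/
def hFun (n : ℕ) : ℤ := ∏ p ∈ n.primeFactors, hPP (n.factorization p)

/-! ### Auxiliary definitions -/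

/-- Values of `g` (the characteristic function of squares times τ of the square root)
on prime powers. -/
def Gfun (a : ℕ) : ℤ := if a % 2 = 0 then ((a / 2 + 1 : ℕ) : ℤ) else 0

/-- `hPP` extended by `1` at `0`. -/
def Hfun (a : ℕ) : ℤ := if a = 0 then 1 else hPP a

/-- Generic multiplicative function built from values on prime powers. -/
def prodPF (F : ℕ → ℤ) : ArithmeticFunction ℤ :=
  ⟨fun n => if n = 0 then 0 else ∏ p ∈ n.primeFactors, F (n.factorization p), by simp⟩

lemma prodPF_apply (F : ℕ → ℤ) {n : ℕ} (hn : n ≠ 0) :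
    prodPF F n = ∏ p ∈ n.primeFactors, F (n.factorization p) := by
  simp [prodPF, hn]

lemma prod_pf_mul (F : ℕ → ℤ) {m n : ℕ} (hm : m ≠ 0) (hn : n ≠ 0) (hmn : m.Coprime n) :
    ∏ p ∈ (m * n).primeFactors, F ((m * n).factorization p)
      = (∏ p ∈ m.primeFactors, F (m.factorization p)) *
        ∏ p ∈ n.primeFactors, F (n.factorization p) := by
  rw [Nat.primeFactors_mul hm hn,
    Finset.prod_union hmn.disjoint_primeFactors]
  congr 1
  · refine Finset.prod_congr rfl fun p hp => ?_
    have hpp := Nat.prime_of_mem_primeFactors hp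
    have hpn : ¬ p ∣ n := fun hd =>
      hpp.not_dvd_one (hmn ▸ Nat.dvd_gcd (Nat.dvd_of_mem_primeFactors hp) hd)
    rw [Nat.factorization_mul hm hn, Finsupp.add_apply,
      Nat.factorization_eq_zero_of_not_dvd hpn, add_zero]
  · refine Finset.prod_congr rfl fun p hp => ?_
    have hpp := Nat.prime_of_mem_primeFactors hp
    have hpm : ¬ p ∣ m := fun hd =>
      hpp.not_dvd_one (hmn ▸ Nat.dvd_gcd hd (Nat.dvd_of_mem_primeFactors hp))
    rw [Nat.factorization_mul hm hn, Finsupp.add_apply,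
      Nat.factorization_eq_zero_of_not_dvd hpm, zero_add]

lemma prodPF_mult (F : ℕ → ℤ) : (prodPF F).IsMultiplicative := by
  constructor
  · simp [prodPF]
  · intro m n hmn
    rcases eq_or_ne m 0 with rfl | hm
    · have h1 : n = 1 := by simpa using hmn
      subst h1; simp [prodPF]
    rcases eq_or_ne n 0 with rfl | hn
    · have h1 : m = 1 := by simpa using hmn
      subst h1; simp [prodPF]
    rw [prodPF_apply F (mul_ne_zero hm hn), prodPF_apply F hm, prodPF_apply F hn]
    exact prod_pf_mul F hm hn hmn

lemma prodPF_prime_pow (F : ℕ → ℤ) {p : ℕ} (hp : p.Prime) {a : ℕ} (ha : a ≠ 0) :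
    prodPF F (p ^ a) = F a := by
  rw [prodPF_apply F (pow_ne_zero a hp.pos.ne'),
    Nat.primeFactors_prime_pow ha hp, Finset.prod_singleton,
    Nat.Prime.factorization_pow hp, Finsupp.single_eq_same]

/-- The arithmetic function `g`. -/
def gA : ArithmeticFunction ℤ := prodPF Gfun

/-- The arithmetic function version of `hFun`. -/
def hA : ArithmeticFunction ℤ := prodPF (fun a => if a = 0 then 1 else hPP a)

lemma hA_apply {n : ℕ} (hn : n ≠ 0) : hA n = hFun n := by
  rw [hA, prodPF_apply _ hn, hFun]
  refine Finset.prod_congr rfl fun p hp => ?_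
  rw [if_neg]
  exact (Nat.Prime.factorization_pos_of_dvd (Nat.prime_of_mem_primeFactors hp) hn
    (Nat.dvd_of_mem_primeFactors hp)).ne'

lemma hA_prime_pow {p : ℕ} (hp : p.Prime) (a : ℕ) : hA (p ^ a) = Hfun a := by
  rcases eq_or_ne a 0 with rfl | ha
  · simp [hA, prodPF, Hfun]
  · rw [hA, prodPF_prime_pow _ hp ha]
    simp [Hfun, ha]

lemma gA_prime_pow {p : ℕ} (hp : p.Prime) (a : ℕ) : gA (p ^ a) = Gfun a := by
  rcases eq_or_ne a 0 with rfl | ha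
  · simp [gA, prodPF, Gfun]
  · exact prodPF_prime_pow _ hp ha

/-- `g (d²) = τ d`. -/
lemma gA_sq {d : ℕ} (hd : d ≠ 0) : gA (d ^ 2) = (d.divisors.card : ℤ) := by
  rw [gA, prodPF_apply _ (pow_ne_zero 2 hd),
    Nat.primeFactors_pow d two_ne_zero, Nat.card_divisors hd, Nat.cast_prod]
  refine Finset.prod_congr rfl fun p hp => ?_
  rw [Nat.factorization_pow, Finsupp.smul_apply, smul_eq_mul, Gfun, if_pos (by omega)]
  congr 1
  omega

/-- `g e = 0` when `e` is not a square. -/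
lemma gA_eq_zero {e : ℕ} (he : e ≠ 0) (hsq : ¬ IsSquare e) : gA e = 0 := by
  rw [gA, prodPF_apply _ he]
  by_contra h
  apply hsq
  have hodd : ∀ p ∈ e.primeFactors, e.factorization p % 2 = 0 := by
    intro p hp
    by_contra hodd
    exact h (Finset.prod_eq_zero hp (by rw [Gfun, if_neg hodd]))
  refine ⟨∏ p ∈ e.primeFactors, p ^ (e.factorization p / 2), ?_⟩
  rw [← Finset.prod_mul_distrib]
  conv_lhs => rw [← Nat.factorization_prod_pow_eq_self he,
    Nat.prod_factorization_eq_prod_primeFactors]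
  refine Finset.prod_congr rfl fun p hp => ?_
  rw [← pow_add]
  congr 1
  have := hodd p hp
  omega

/-- The left-hand side as an arithmetic function. -/
noncomputable def lA : ArithmeticFunction ℤ :=
  ⟨fun n => if n = 0 then 0
    else (if Squarefull n then 1 else 0) * 2 ^ n.primeFactors.card, by simp⟩

lemma squarefull_one : Squarefull 1 := fun p hp hd =>
  absurd (Nat.dvd_one.mp hd) hp.ne_one

lemma squarefull_mul_iff {m n : ℕ} (hmn : m.Coprime n) :
    Squarefull (m * n) ↔ Squarefull m ∧ Squarefull n := by
  constructor
  · intro H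
    constructor
    · intro p hp hd
      have hpn : Nat.Coprime (p ^ 2) n :=
        (Nat.Coprime.coprime_dvd_left hd hmn).pow_left 2
      exact hpn.dvd_of_dvd_mul_right (H p hp (hd.mul_right n))
    · intro p hp hd
      have hpm : Nat.Coprime (p ^ 2) m :=
        (Nat.Coprime.coprime_dvd_left hd hmn.symm).pow_left 2
      exact hpm.dvd_of_dvd_mul_left (H p hp (hd.mul_left m))
  · rintro ⟨H1, H2⟩ p hp hd
    rcases (Nat.Prime.dvd_mul hp).mp hd with h | h
    · exact (H1 p hp h).mul_right n
    · exact (H2 p hp h).mul_left m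

lemma lA_mult : lA.IsMultiplicative := by
  constructor
  · simp [lA, squarefull_one]
  · intro m n hmn
    rcases eq_or_ne m 0 with rfl | hm
    · have h1 : n = 1 := by simpa using hmn
      subst h1; simp [lA]
    rcases eq_or_ne n 0 with rfl | hn
    · have h1 : m = 1 := by simpa using hmn
      subst h1; simp [lA]
    show (if m * n = 0 then 0 else _) = (if m = 0 then 0 else _) * (if n = 0 then 0 else _)
    rw [if_neg (mul_ne_zero hm hn), if_neg hm, if_neg hn,
      Nat.primeFactors_mul hm hn, Finset.card_union_of_disjoint hmn.disjoint_primeFactors,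
      pow_add]
    by_cases h1 : Squarefull m <;> by_cases h2 : Squarefull n <;>
      simp [squarefull_mul_iff hmn, h1, h2] <;> ring

lemma lA_prime_pow {p : ℕ} (hp : p.Prime) {a : ℕ} (ha : a ≠ 0) :
    lA (p ^ a) = if a = 1 then 0 else 2 := by
  have hne : p ^ a ≠ 0 := pow_ne_zero a hp.pos.ne'
  show (if p ^ a = 0 then 0 else _) = _
  rw [if_neg hne, Nat.primeFactors_prime_pow ha hp, Finset.card_singleton, pow_one]
  rcases eq_or_ne a 1 with rfl | h1
  · rw [if_pos rfl, if_neg, zero_mul]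
    intro H
    have := Nat.le_of_dvd (pow_pos hp.pos 1) (H p hp (by simpa using dvd_rfl))
    have := hp.two_le
    nlinarith [pow_lt_pow_right₀ hp.one_lt one_lt_two]
  · rw [if_neg h1, if_pos, one_mul]
    intro q hq hd
    have hqp : q = p := (Nat.prime_dvd_prime_iff_eq hq hp).mp (hq.dvd_of_dvd_pow hd)
    subst hqp
    exact pow_dvd_pow q (by omega)

/-- The key computation at prime powers. -/
lemma Hsum (a : ℕ) (ha : 1 ≤ a) :
    ∑ i ∈ Finset.range (a + 1), Gfun i * Hfun (a - i) = if a = 1 then 0 else 2 := by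
  rcases le_or_gt a 6 with h | h
  · interval_cases a <;> decide
  · rw [if_neg (by omega)]
    have hsub : ({a - 5, a - 4, a - 3, a} : Finset ℕ) ⊆ Finset.range (a + 1) := by
      intro x hx
      simp only [Finset.mem_insert, Finset.mem_singleton] at hx
      rw [Finset.mem_range]; omega
    rw [← Finset.sum_subset hsub (fun i hi hni => ?_)]
    · have h5 : a - (a - 5) = 5 := by omega
      have h4 : a - (a - 4) = 4 := by omega
      have h3 : a - (a - 3) = 3 := by omega
      rw [Finset.sum_insert (by simp; omega), Finset.sum_insert (by simp; omega),
        Finset.sum_insert (by simp; omega), Finset.sum_singleton, h5, h4, h3,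
        Nat.sub_self]
      have hH5 : Hfun 5 = -2 := by decide
      have hH4 : Hfun 4 = -1 := by decide
      have hH3 : Hfun 3 = 2 := by decide
      have hH0 : Hfun 0 = 1 := by decide
      rw [hH5, hH4, hH3, hH0]
      rcases Nat.even_or_odd a with he | ho
      · have e1 : a % 2 = 0 := Nat.even_iff.mp he
        have e5 : ¬ (a - 5) % 2 = 0 := by omega
        have e4 : (a - 4) % 2 = 0 := by omega
        have e3 : ¬ (a - 3) % 2 = 0 := by omega
        rw [Gfun, Gfun, Gfun, Gfun, if_neg e5, if_pos e4, if_neg e3, if_pos e1]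
        have hd4 : (a - 4) / 2 + 1 = a / 2 - 1 := by omega
        rw [hd4]
        have : 1 ≤ a / 2 := by omega
        push_cast [this]
        ring
      · have e1 : ¬ a % 2 = 0 := by
          have := Nat.odd_iff.mp ho; omega
        have e5 : (a - 5) % 2 = 0 := by omega
        have e4 : ¬ (a - 4) % 2 = 0 := by omega
        have e3 : (a - 3) % 2 = 0 := by omega
        rw [Gfun, Gfun, Gfun, Gfun, if_pos e5, if_neg e4, if_pos e3, if_neg e1]
        have hd5 : (a - 5) / 2 + 1 = (a - 3) / 2 := by omega
        have hd3 : 1 ≤ (a - 3) / 2 := by omega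
        rw [hd5]
        push_cast [hd3]
        ring
    · have hile : i ≤ a := by rw [Finset.mem_range] at hi; omega
      simp only [Finset.mem_insert, Finset.mem_singleton] at hni
      push_neg at hni
      obtain ⟨n5, n4, n3, n0⟩ := hni
      have j5 : a - i ≠ 5 := by omega
      have j4 : a - i ≠ 4 := by omega
      have j3 : a - i ≠ 3 := by omega
      have j0 : a - i ≠ 0 := by omega
      rw [Hfun, if_neg j0, hPP, if_neg j3, if_neg j4, if_neg j5, mul_zero]

lemma conv_prime_pow {p : ℕ} (hp : p.Prime) (a : ℕ) :
    (gA * hA) (p ^ a) = ∑ i ∈ Finset.range (a + 1), Gfun i * Hfun (a - i) := by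
  rw [ArithmeticFunction.mul_apply,
    Nat.sum_divisorsAntidiagonal (fun x y => gA x * hA y),
    Nat.sum_divisors_prime_pow hp]
  refine Finset.sum_congr rfl fun i hi => ?_
  have hile : i ≤ a := by rw [Finset.mem_range] at hi; omega
  rw [Nat.pow_div hile hp.pos, gA_prime_pow hp, hA_prime_pow hp]

lemma conv_eq_lA : gA * hA = lA := by
  have hgm : gA.IsMultiplicative := prodPF_mult _
  have hhm : hA.IsMultiplicative := prodPF_mult _
  rw [ArithmeticFunction.IsMultiplicative.eq_iff_eq_on_prime_powers _ (hgm.mul hhm) _ lA_mult]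
  intro p i hp
  rcases eq_or_ne i 0 with rfl | hi
  · rw [pow_zero, (hgm.mul hhm).map_one, lA_mult.map_one]
  · rw [conv_prime_pow hp, Hsum i (by omega), lA_prime_pow hp hi]

theorem squarefull_twoPowOmega_eq_sum (n : ℕ) (hn : 1 ≤ n) :
    ((if Squarefull n then 1 else 0) * 2 ^ n.primeFactors.card : ℤ) =
      ∑ d ∈ n.divisors,
        if d ^ 2 ∣ n then (d.divisors.card : ℤ) * hFun (n / d ^ 2) else 0 := by
  have hn0 : n ≠ 0 := by omega
  have hL : ((if Squarefull n then 1 else 0) * 2 ^ n.primeFactors.card : ℤ) = lA n := by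
    show _ = (if n = 0 then 0 else _)
    rw [if_neg hn0]
  rw [hL, ← conv_eq_lA, ArithmeticFunction.mul_apply,
    Nat.sum_divisorsAntidiagonal (fun x y => gA x * hA y)]
  rw [← Finset.sum_filter]
  have hkey : ∀ e ∈ n.divisors, gA e * hA (n / e) ≠ 0 → IsSquare e := by
    intro e he hne
    by_contra hsq
    exact hne (by rw [gA_eq_zero (Nat.pos_of_mem_divisors he).ne' hsq, zero_mul])
  rw [← Finset.sum_filter_of_ne hkey]
  refine Finset.sum_nbij' Nat.sqrt (fun d => d ^ 2) ?_ ?_ ?_ ?_ ?_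
  · intro e he
    rw [Finset.mem_filter] at he ⊢
    obtain ⟨hed, c, hc⟩ := he
    have hsq : e.sqrt = c := by rw [hc, Nat.sqrt_eq]
    have hce : e.sqrt ^ 2 = e := by rw [hsq, hc]; ring
    have h1 : e.sqrt ∣ e := by rw [hsq]; exact hc ▸ dvd_mul_right c c
    refine ⟨Nat.mem_divisors.mpr ⟨h1.trans (Nat.dvd_of_mem_divisors hed), hn0⟩, ?_⟩
    rw [hce]; exact Nat.dvd_of_mem_divisors hed
  · intro d hd
    rw [Finset.mem_filter] at hd ⊢
    exact ⟨Nat.mem_divisors.mpr ⟨hd.2, hn0⟩, ⟨d, sq d⟩⟩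
  · intro e he
    rw [Finset.mem_filter] at he
    obtain ⟨_, c, hc⟩ := he
    simp only [hc, show c * c = c ^ 2 by ring, Nat.sqrt_eq']
  · intro d _
    exact Nat.sqrt_eq' d
  · intro e he
    rw [Finset.mem_filter] at he
    obtain ⟨hed, c, hc⟩ := he
    subst hc
    have hc0 : c ≠ 0 := by
      intro h; subst h; simpa using Nat.pos_of_mem_divisors hed
    rw [Nat.sqrt_eq, show c * c = c ^ 2 by ring]
    have hne0 : n / c ^ 2 ≠ 0 := by
      refine Nat.div_ne_zero_iff.mpr ⟨by positivity,
        Nat.le_of_dvd (by omega) ?_⟩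
      rw [pow_two]; exact Nat.dvd_of_mem_divisors hed
    rw [gA_sq hc0, hA_apply hne0]
end

section
/- Let v = t^(e) * f where f = μ₂ * μ as above. Then v is multiplicative with v(p) = v(p²) = v(p³) = 0 and v(p^a) = 2^{ω(a)} − 2^{ω(a−1)} − 2^{ω(a−2)} + 2^{ω(a−3)} for a ≥ 4. -/
open Nat ArithmeticFunction Finset
open scoped Classical

/-- `t^(e)` as an arithmetic function: `t^(e)(p^a) = 2^{ω(a)}`. -/
noncomputable def tE : ArithmeticFunction ℤ :=
  ⟨fun n => if n = 0 then 0
    else ∏ p ∈ n.primeFactors, 2 ^ (n.factorization p).primeFactors.card, by simp⟩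

/-- `μ₂(n) = μ(m)` if `n = m²`, and `0` otherwise. -/
noncomputable def mu2 : ArithmeticFunction ℤ :=
  ⟨fun n => if IsSquare n then moebius (Nat.sqrt n) else 0, by simp⟩

lemma tE_apply {n : ℕ} (hn : n ≠ 0) :
    tE n = ∏ p ∈ n.primeFactors, 2 ^ (n.factorization p).primeFactors.card := if_neg hn

lemma tE_prime_pow {p : ℕ} (hp : p.Prime) (a : ℕ) :
    tE (p ^ a) = 2 ^ a.primeFactors.card := by
  rcases Nat.eq_zero_or_pos a with rfl | ha
  · simp [tE]
  · rw [tE_apply (pow_ne_zero _ hp.pos.ne'),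
      Nat.primeFactors_prime_pow ha.ne' hp, Finset.prod_singleton,
      hp.factorization_pow, Finsupp.single_eq_same]

lemma tE_mult : tE.IsMultiplicative := by
  rw [ArithmeticFunction.IsMultiplicative.iff_ne_zero]
  refine ⟨by simp [tE], fun {m n} hm hn hmn => ?_⟩
  rw [tE_apply (mul_ne_zero hm hn), tE_apply hm, tE_apply hn,
    Nat.primeFactors_mul hm hn,
    Finset.prod_union (Nat.Coprime.disjoint_primeFactors hmn)]
  congr 1
  · refine Finset.prod_congr rfl fun p hp => ?_
    have h0 : n.factorization p = 0 := by
      rw [← Finsupp.notMem_support_iff, Nat.support_factorization]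
      exact Finset.disjoint_left.mp (Nat.Coprime.disjoint_primeFactors hmn) hp
    rw [Nat.factorization_mul hm hn, Finsupp.add_apply, h0, add_zero]
  · refine Finset.prod_congr rfl fun p hp => ?_
    have h0 : m.factorization p = 0 := by
      rw [← Finsupp.notMem_support_iff, Nat.support_factorization]
      exact Finset.disjoint_right.mp (Nat.Coprime.disjoint_primeFactors hmn) hp
    rw [Nat.factorization_mul hm hn, Finsupp.add_apply, h0, zero_add]

lemma coprime_isSquare {m n : ℕ} (h : Nat.Coprime m n) (hsq : IsSquare (m * n)) :
    IsSquare m := by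
  obtain ⟨c, hc⟩ := hsq
  obtain ⟨d, hd⟩ := exists_eq_pow_of_mul_eq_pow (α := ℕ) (a := m) (b := n) (c := c) (k := 2)
    (by rw [Nat.isUnit_iff]; exact h) (by rw [hc, sq])
  exact ⟨d, by rw [hd, sq]⟩

lemma mu2_mult : mu2.IsMultiplicative := by
  rw [ArithmeticFunction.IsMultiplicative.iff_ne_zero]
  refine ⟨by simp [mu2], fun {m n} hm hn hmn => ?_⟩
  by_cases hsq : IsSquare (m * n)
  · have hm2 : IsSquare m := coprime_isSquare hmn hsq
    have hn2 : IsSquare n := coprime_isSquare hmn.symm (mul_comm m n ▸ hsq)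
    obtain ⟨a, rfl⟩ := hm2
    obtain ⟨b, rfl⟩ := hn2
    have hab : Nat.Coprime a b :=
      Nat.Coprime.coprime_dvd_left (Dvd.intro a rfl)
        (Nat.Coprime.coprime_dvd_right (Dvd.intro b rfl) hmn)
    have : a * a * (b * b) = (a * b) * (a * b) := by ring
    simp only [mu2, ArithmeticFunction.coe_mk, this, if_pos (IsSquare.mul_self _),
      Nat.sqrt_eq]
    exact (ArithmeticFunction.isMultiplicative_moebius).2 hab
  · have h1 : ¬ IsSquare m ∨ ¬ IsSquare n := by
      by_contra hc
      push_neg at hc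
      obtain ⟨⟨a, rfl⟩, ⟨b, rfl⟩⟩ := hc
      exact hsq ⟨a * b, by ring⟩
    simp only [mu2, ArithmeticFunction.coe_mk, if_neg hsq]
    rcases h1 with h1 | h1 <;> rw [if_neg h1] <;> ring

lemma isSquare_prime_pow_iff {p : ℕ} (hp : p.Prime) (i : ℕ) :
    IsSquare (p ^ i) ↔ Even i := by
  constructor
  · rintro ⟨r, hr⟩
    have hr' : p ^ i = r ^ 2 := by rw [hr, sq]
    have := congrArg (fun x => x.factorization p) hr'
    simp only [hp.factorization_pow, Finsupp.single_eq_same, Nat.factorization_pow,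
      Finsupp.smul_apply, smul_eq_mul] at this
    exact this ▸ even_two_mul _
  · rintro ⟨k, rfl⟩
    exact ⟨p ^ k, by rw [← pow_add]⟩

lemma sqrt_prime_pow {p k : ℕ} : Nat.sqrt (p ^ (k + k)) = p ^ k := by
  rw [pow_add, Nat.sqrt_eq]

lemma mu2_one : mu2 1 = 1 := by simp [mu2]

lemma tE_one : tE 1 = 1 := by simp [tE]

lemma mu2_prime_pow {p : ℕ} (hp : p.Prime) (i : ℕ) :
    mu2 (p ^ i) = if i = 0 then 1 else if i = 2 then -1 else 0 := by
  by_cases he : Even i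
  · obtain ⟨k, rfl⟩ := he
    have : mu2 (p ^ (k + k)) = moebius (p ^ k) := by
      simp only [mu2, ArithmeticFunction.coe_mk,
        if_pos ((isSquare_prime_pow_iff hp _).2 ⟨k, rfl⟩), sqrt_prime_pow]
    rw [this]
    rcases Nat.eq_zero_or_pos k with rfl | hk
    · simp
    · rw [if_neg (by omega), moebius_apply_prime_pow hp hk.ne']
      rcases eq_or_ne k 1 with rfl | hk1
      · simp
      · rw [if_neg hk1, if_neg (by omega)]
    
  · have : mu2 (p ^ i) = 0 := by
      simp only [mu2, ArithmeticFunction.coe_mk,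
        if_neg (fun h => he ((isSquare_prime_pow_iff hp _).1 h))]
    rw [this, if_neg (by rintro rfl; exact he Even.zero), if_neg (by rintro rfl; simp at he)]

lemma mul_apply_prime_pow (f g : ArithmeticFunction ℤ) {p : ℕ} (hp : p.Prime) (a : ℕ) :
    (f * g) (p ^ a) = ∑ i ∈ Finset.range (a + 1), f (p ^ (a - i)) * g (p ^ i) := by
  rw [ArithmeticFunction.mul_apply,
    Nat.sum_divisorsAntidiagonal' (f := fun x y => f x * g y),
    Nat.sum_divisors_prime_pow hp]
  refine Finset.sum_congr rfl fun i hi => ?_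
  rw [Nat.pow_div (by simpa using Nat.lt_succ_iff.mp (Finset.mem_range.mp hi)) hp.pos]

lemma mu2mu_prime_pow {p : ℕ} (hp : p.Prime) (c : ℕ) :
    (mu2 * moebius) (p ^ c) =
      if c = 0 then 1 else if c = 1 then -1 else if c = 2 then -1 else
        if c = 3 then 1 else 0 := by
  rw [mul_apply_prime_pow _ _ hp]
  have hmoeb : ∀ j : ℕ, (moebius (p ^ j) : ℤ) = if j = 0 then 1 else if j = 1 then -1 else 0 := by
    intro j
    rcases Nat.eq_zero_or_pos j with rfl | hj
    · simp
    · rw [moebius_apply_prime_pow hp hj.ne', if_neg hj.ne']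
  match c with
  | 0 => simp [Finset.sum_range_succ, mu2_prime_pow hp, hmoeb, mu2_one]
  | 1 => simp [Finset.sum_range_succ, mu2_prime_pow hp, hmoeb, mu2_one]
  | 2 => simp [Finset.sum_range_succ, mu2_prime_pow hp, hmoeb, mu2_one]
  | 3 => simp [Finset.sum_range_succ, mu2_prime_pow hp, hmoeb, mu2_one]
  | (k + 4) =>
    rw [if_neg (by omega), if_neg (by omega), if_neg (by omega), if_neg (by omega)]
    refine Finset.sum_eq_zero fun i hi => ?_
    rcases lt_or_ge i 2 with h | h
    · rw [mu2_prime_pow hp, if_neg (by omega), if_neg (by omega), zero_mul]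
    · rw [hmoeb, if_neg (by omega), if_neg (by omega), mul_zero]

theorem v_prime_power_values :
    (tE * (mu2 * moebius)).IsMultiplicative ∧
      ∀ p : ℕ, p.Prime →
        (tE * (mu2 * moebius)) p = 0 ∧ (tE * (mu2 * moebius)) (p ^ 2) = 0 ∧
          (tE * (mu2 * moebius)) (p ^ 3) = 0 ∧
          ∀ a : ℕ, 4 ≤ a →
            (tE * (mu2 * moebius)) (p ^ a) =
              2 ^ a.primeFactors.card - 2 ^ (a - 1).primeFactors.card -
                2 ^ (a - 2).primeFactors.card + 2 ^ (a - 3).primeFactors.card := by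
  have hmult : (tE * (mu2 * moebius)).IsMultiplicative :=
    tE_mult.mul (mu2_mult.mul ArithmeticFunction.isMultiplicative_moebius)
  refine ⟨hmult, fun p hp => ?_⟩
  have key : ∀ a : ℕ, (tE * (mu2 * moebius)) (p ^ a) =
      ∑ i ∈ Finset.range (a + 1), tE (p ^ (a - i)) * (mu2 * moebius) (p ^ i) :=
    fun a => mul_apply_prime_pow _ _ hp a
  have hω : ∀ b : ℕ, tE (p ^ b) = 2 ^ b.primeFactors.card := tE_prime_pow hp
  have hc1 : (1 : ℕ).primeFactors.card = 0 := by simp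
  have hc2 : (2 : ℕ).primeFactors.card = 1 := by rw [Nat.Prime.primeFactors Nat.prime_two]; rfl
  have hc3 : (3 : ℕ).primeFactors.card = 1 := by rw [Nat.Prime.primeFactors Nat.prime_three]; rfl
  refine ⟨?_, ?_, ?_, ?_⟩
  · have := key 1
    rw [pow_one] at this
    rw [this]
    simp [Finset.sum_range_succ, hω, mu2mu_prime_pow hp, hc1, mu2_one, tE_one]
  · rw [key 2]
    simp [Finset.sum_range_succ, hω, mu2mu_prime_pow hp, hc1, hc2, mu2_one, tE_one]
  · rw [key 3]
    simp only [Finset.sum_range_succ, Finset.sum_range_zero, hω, mu2mu_prime_pow hp]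
    norm_num [hc1, hc2, hc3]
  · intro a ha
    rw [key a]
    rw [show a + 1 = 4 + (a - 3) by omega, Finset.sum_range_add]
    have h2 : ∑ i ∈ Finset.range (a - 3), tE (p ^ (a - (4 + i))) *
        (mu2 * moebius) (p ^ (4 + i)) = 0 := by
      refine Finset.sum_eq_zero fun i hi => ?_
      rw [mu2mu_prime_pow hp, if_neg (by omega), if_neg (by omega), if_neg (by omega),
        if_neg (by omega), mul_zero]
    rw [h2, add_zero]
    simp only [Finset.sum_range_succ, Finset.sum_range_zero, hω, mu2mu_prime_pow hp]
    norm_num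
    ring
end
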